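/- Every complete separable ultrahomogeneous metric space contains a countable dense metric subspace that is itself ultrahomogeneous. -/

import Mathlib

lemma aux_finset_subset_countable {α : Type*} {A : Set α} (hA : A.Countable) :
    {s : Finset α | ↑s ⊆ A}.Countable := by
  have h := Set.countable_setOf_finite_subset hA
  have : {s : Finset α | ↑s ⊆ A} ⊆ (fun (s : Finset α) => (s : Set α)) ⁻¹' {t : Set α | t.Finite ∧ t ⊆ A} := by
    intro s hs; exact ⟨s.finite_toSet, hs⟩
  exact (h.preimage Finset.coe_injective).mono this

lemma aux_exists_stage {α : Type*} {E : ℕ → Set α} (hE : Monotone E) {s : Set α}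
    (hs : s.Finite) (h : s ⊆ ⋃ n, E n) : ∃ n, s ⊆ E n := by
  obtain ⟨I, Ifin, hI⟩ := Set.finite_subset_iUnion hs h
  obtain ⟨n, hn⟩ := Ifin.bddAbove
  refine ⟨n, hI.trans ?_⟩
  intro x hx
  simp only [Set.mem_iUnion] at hx
  obtain ⟨i, hi, hxi⟩ := hx
  exact hE (hn hi) hxi

theorem exists_countable_dense_ultrahomogeneous_subspace
    {Y : Type*} [MetricSpace Y] [CompleteSpace Y] [TopologicalSpace.SeparableSpace Y]
    (hultra : ∀ (F : Finset Y) (φ : Y → Y),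
      (∀ x ∈ F, ∀ y ∈ F, dist (φ x) (φ y) = dist x y) →
      ∃ ψ : Y ≃ᵢ Y, ∀ x ∈ F, ψ x = φ x) :
    ∃ D : Set Y, D.Countable ∧ Dense D ∧
      ∀ (F : Finset Y), ↑F ⊆ D →
        ∀ φ : Y → Y, (∀ x ∈ F, ∀ y ∈ F, dist (φ x) (φ y) = dist x y) →
          (∀ x ∈ F, φ x ∈ D) →
          ∃ ψ : Y → Y, (∀ a ∈ D, ∀ b ∈ D, dist (ψ a) (ψ b) = dist a b) ∧
            ψ '' D = D ∧ ∀ x ∈ F, ψ x = φ x := by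
  classical
  -- For every finite "partial isometry graph" there is a global isometry extending it.
  have key : ∀ s : Finset (Y × Y), ∃ ψ : Y ≃ᵢ Y,
      (∀ p ∈ s, ∀ q ∈ s, dist p.2 q.2 = dist p.1 q.1) → ∀ p ∈ s, ψ p.1 = p.2 := by
    intro s
    by_cases hgood : ∀ p ∈ s, ∀ q ∈ s, dist p.2 q.2 = dist p.1 q.1
    · set φ : Y → Y := fun x => if hx : ∃ b, (x, b) ∈ s then hx.choose else x with hφdef
      have hφ : ∀ x b, (x, b) ∈ s → φ x = b := by
        intro x b hb
        have hx : ∃ b, (x, b) ∈ s := ⟨b, hb⟩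
        have h1 : (x, hx.choose) ∈ s := hx.choose_spec
        have : dist hx.choose b = dist x x := hgood _ h1 _ hb
        simp only [dist_self] at this
        have h2 : hx.choose = b := by rwa [dist_eq_zero] at this
        simp [hφdef, hx, h2]
      obtain ⟨ψ, hψ⟩ := hultra (s.image Prod.fst) φ (by
        intro x hx y hy
        simp only [Finset.mem_image] at hx hy
        obtain ⟨p, hp, rfl⟩ := hx
        obtain ⟨q, hq, rfl⟩ := hy
        rw [hφ _ _ (show (p.1, p.2) ∈ s from hp), hφ _ _ (show (q.1, q.2) ∈ s from hq)]
        exact hgood p hp q hq)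
      refine ⟨ψ, fun _ p hp => ?_⟩
      rw [hψ p.1 (Finset.mem_image_of_mem _ hp), hφ _ _ (show (p.1, p.2) ∈ s from hp)]
    · exact ⟨IsometryEquiv.refl Y, fun h => absurd h hgood⟩
  choose Ψ hΨ using key
  obtain ⟨D₀, hD₀c, hD₀d⟩ := TopologicalSpace.exists_countable_dense Y
  -- the increasing sequence of stages
  set E : ℕ → Set Y := fun n => Nat.rec D₀
    (fun _ En => En ∪ ⋃ s ∈ {s : Finset (Y × Y) | ↑s ⊆ En ×ˢ En},
      (Ψ s '' En ∪ (Ψ s).symm '' En)) n with hE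
  have hEsucc : ∀ n, E (n + 1) = E n ∪ ⋃ s ∈ {s : Finset (Y × Y) | ↑s ⊆ E n ×ˢ E n},
      (Ψ s '' E n ∪ (Ψ s).symm '' E n) := fun n => rfl
  have hEmono : Monotone E := by
    apply monotone_nat_of_le_succ
    intro n
    rw [hEsucc]
    exact Set.subset_union_left
  have hEc : ∀ n, (E n).Countable := by
    intro n
    induction n with
    | zero => exact hD₀c
    | succ n ih =>
      rw [hEsucc]
      refine ih.union (Set.Countable.biUnion ?_ fun s _ => ?_)
      · exact aux_finset_subset_countable (ih.prod ih)
      · exact (ih.image _).union (ih.image _)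
  refine ⟨⋃ n, E n, Set.countable_iUnion hEc, hD₀d.mono (Set.subset_iUnion E 0), ?_⟩
  intro F hFD φ hφiso hφD
  set s : Finset (Y × Y) := F.image (fun x => (x, φ x)) with hs
  have hsgood : ∀ p ∈ s, ∀ q ∈ s, dist p.2 q.2 = dist p.1 q.1 := by
    intro p hp q hq
    simp only [hs, Finset.mem_image] at hp hq
    obtain ⟨x, hx, rfl⟩ := hp
    obtain ⟨y, hy, rfl⟩ := hq
    exact hφiso x hx y hy
  have hagree : ∀ x ∈ F, Ψ s x = φ x := fun x hx =>
    hΨ s hsgood (x, φ x) (Finset.mem_image_of_mem _ hx)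
  -- find a stage containing s
  obtain ⟨n, hn⟩ : ∃ n, (↑F ∪ φ '' ↑F : Set Y) ⊆ E n := by
    refine aux_exists_stage hEmono (F.finite_toSet.union (F.finite_toSet.image φ)) ?_
    rintro x (hx | ⟨y, hy, rfl⟩)
    · exact hFD hx
    · exact hφD y hy
  have hsE : ∀ m, n ≤ m → ↑s ⊆ E m ×ˢ E m := by
    intro m hm
    intro p hp
    simp only [hs, Finset.coe_image, Set.mem_image, Finset.mem_coe] at hp
    obtain ⟨x, hx, rfl⟩ := hp
    exact ⟨hEmono hm (hn (Or.inl hx)), hEmono hm (hn (Or.inr ⟨x, hx, rfl⟩))⟩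
  have himg : ∀ m, n ≤ m → Ψ s '' E m ⊆ E (m + 1) ∧ (Ψ s).symm '' E m ⊆ E (m + 1) := by
    intro m hm
    constructor <;>
    · rw [hEsucc]
      refine fun y hy => Or.inr ?_
      simp only [Set.mem_iUnion]
      exact ⟨s, hsE m hm, by simp [hy]⟩
  have hfwd : Ψ s '' (⋃ m, E m) ⊆ ⋃ m, E m := by
    rw [Set.image_iUnion]
    refine Set.iUnion_subset fun m => ?_
    have h1 : Ψ s '' E m ⊆ Ψ s '' E (max m n) := Set.image_mono (hEmono (le_max_left _ _))
    exact (h1.trans (himg _ (le_max_right _ _)).1).trans (Set.subset_iUnion E (max m n + 1))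
  have hbwd : (Ψ s).symm '' (⋃ m, E m) ⊆ ⋃ m, E m := by
    rw [Set.image_iUnion]
    refine Set.iUnion_subset fun m => ?_
    have h1 : (Ψ s).symm '' E m ⊆ (Ψ s).symm '' E (max m n) :=
      Set.image_mono (hEmono (le_max_left _ _))
    exact (h1.trans (himg _ (le_max_right _ _)).2).trans (Set.subset_iUnion E (max m n + 1))
  refine ⟨Ψ s, fun a _ b _ => (Ψ s).isometry.dist_eq a b, ?_, hagree⟩
  apply Set.Subset.antisymm hfwd
  intro d hd
  refine ⟨(Ψ s).symm d, hbwd ⟨d, hd, rfl⟩, (Ψ s).apply_symm_apply d⟩
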